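/- Let x and y be elements of a ring R with identity, and ω ∈ R such that ωx = xω, ωy = yω, and xy = ωyx. Then for every nonnegative integer q, (x + y)^q = ∑_{k=0}^q c_k y^k x^{q-k}, where the coefficients c_k are the Gaussian (q-)binomial coefficients in ω, i.e. they satisfy φ_k φ_{q-k} c_k = φ_q with φ_k = ∏_{s=1}^k (1 + ω + ⋯ + ω^{s-1}) whenever these are invertible (equivalently, c_k is the Gaussian binomial coefficient evaluated at ω). -/

import Mathlib

/-- The Gaussian (q-)binomial coefficient `[n choose k]_ω` in a ring,
defined via the q-Pascal recursion
`[n+1 choose k+1]_ω = [n choose k]_ω + ω^(k+1) * [n choose k+1]_ω`. -/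
def qBinom {R : Type*} [Ring R] (ω : R) : ℕ → ℕ → R
  | _, 0 => 1
  | 0, _ + 1 => 0
  | n + 1, k + 1 => qBinom ω n k + ω ^ (k + 1) * qBinom ω n (k + 1)

/-- `φ_k = ∏_{s=1}^k (1 + ω + ⋯ + ω^(s-1))`. -/
def qPhi {R : Type*} [Ring R] (ω : R) (k : ℕ) : R :=
  ((List.range k).map (fun s => ∑ i ∈ Finset.range (s + 1), ω ^ i)).prod

section Aux
variable {R : Type*} [Ring R] (ω : R)

@[simp] lemma qBinom_zero (n : ℕ) : qBinom ω n 0 = 1 := by cases n <;> rfl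

@[simp] lemma qBinom_zero_succ (k : ℕ) : qBinom ω 0 (k+1) = 0 := rfl

lemma qBinom_succ_succ (n k : ℕ) :
    qBinom ω (n+1) (k+1) = qBinom ω n k + ω ^ (k + 1) * qBinom ω n (k + 1) := rfl

lemma qBinom_eq_zero : ∀ n k, n < k → qBinom ω n k = 0
  | 0, k+1, _ => rfl
  | n+1, k+1, h => by
    rw [qBinom_succ_succ, qBinom_eq_zero n k (by omega),
      qBinom_eq_zero n (k+1) (by omega), mul_zero, add_zero]

@[simp] lemma qBinom_self : ∀ n, qBinom ω n n = 1
  | 0 => rfl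
  | n+1 => by
    rw [qBinom_succ_succ, qBinom_self n, qBinom_eq_zero ω n (n+1) (by omega),
      mul_zero, add_zero]

@[simp] lemma qPhi_zero : qPhi ω 0 = 1 := rfl

lemma qPhi_succ (k : ℕ) :
    qPhi ω (k+1) = qPhi ω k * ∑ i ∈ Finset.range (k + 1), ω ^ i := by
  unfold qPhi
  rw [List.range_succ, List.map_append, List.prod_append, List.map_singleton,
    List.prod_singleton]

variable {ω} {a : R}

lemma Commute.qBinom (h : Commute a ω) : ∀ n k, Commute a (qBinom ω n k)
  | _, 0 => by simp
  | 0, k+1 => by simp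
  | n+1, k+1 => by
    rw [qBinom_succ_succ]
    exact (Commute.qBinom h n k).add_right
      ((h.pow_right _).mul_right (Commute.qBinom h n (k+1)))

lemma Commute.qPhi (h : Commute a ω) (k : ℕ) : Commute a (qPhi ω k) := by
  unfold _root_.qPhi
  apply Commute.list_prod_right
  intro p hp
  simp only [List.mem_map, List.mem_range] at hp
  obtain ⟨s, _, rfl⟩ := hp
  exact Commute.sum_right _ _ _ fun i _ => h.pow_right i

lemma qBinom_map {S : Type*} [Ring S] (f : R →+* S) (ω : R) :
    ∀ n k, f (qBinom ω n k) = qBinom (f ω) n k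
  | _, 0 => by simp
  | 0, k+1 => by simp
  | n+1, k+1 => by
    rw [qBinom_succ_succ, qBinom_succ_succ, map_add, map_mul, map_pow,
      qBinom_map f ω n k, qBinom_map f ω n (k+1)]

lemma qPhi_map {S : Type*} [Ring S] (f : R →+* S) (ω : R) (k : ℕ) :
    f (qPhi ω k) = qPhi (f ω) k := by
  unfold qPhi
  rw [← List.prod_map_hom]
  congr 1
  exact List.map_congr_left fun s _ => by simp

end Aux

section Phi

lemma qsum_split {R : Type*} [CommRing R] (ω : R) (k m : ℕ) :
    (∑ i ∈ Finset.range (k + 1), ω ^ i) + ω ^ (k+1) * ∑ i ∈ Finset.range m, ω ^ i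
      = ∑ i ∈ Finset.range (k + 1 + m), ω ^ i := by
  have h : ∀ i ∈ Finset.range m, ω ^ (k + 1 + i) = ω ^ (k+1) * ω ^ i :=
    fun i _ => pow_add ω (k+1) i
  conv_rhs => rw [Finset.sum_range_add]
  rw [Finset.sum_congr rfl h, ← Finset.mul_sum]

lemma qPhi_identity {R : Type*} [CommRing R] (ω : R) :
    ∀ n, ∀ k ≤ n, qPhi ω k * qPhi ω (n - k) * qBinom ω n k = qPhi ω n
  | 0, 0, _ => by simp
  | n+1, 0, _ => by simp
  | n+1, k+1, hk => by
    rcases eq_or_lt_of_le hk with h | h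
    · obtain rfl : k = n := by omega
      simp
    · have hk' : k ≤ n := by omega
      have hk1 : k + 1 ≤ n := by omega
      have h1 : n + 1 - (k+1) = (n - (k+1)) + 1 := by omega
      have hnk : n - k = (n - (k+1)) + 1 := by omega
      have ih1 := qPhi_identity ω n k hk'
      have ih2 := qPhi_identity ω n (k+1) hk1
      have hsum := qsum_split ω k (n - (k+1) + 1)
      rw [show k + 1 + (n - (k+1) + 1) = n + 1 by omega] at hsum
      rw [qBinom_succ_succ, h1, mul_add, qPhi_succ ω n, ← hsum, hnk] at *
      rw [qPhi_succ ω (n - (k+1))] at *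
      rw [qPhi_succ ω k] at *
      set A := ∑ i ∈ Finset.range (k + 1), ω ^ i
      set B := ∑ i ∈ Finset.range (n - (k+1) + 1), ω ^ i
      linear_combination A * ih1 + ω ^ (k+1) * B * ih2

lemma qPhi_identity' {R : Type*} [Ring R] (ω : R) (n k : ℕ) (hk : k ≤ n) :
    qPhi ω k * qPhi ω (n - k) * qBinom ω n k = qPhi ω n := by
  have hc : ∀ a : ℤ, Commute ((Int.castRingHom R) a) ω := fun a => Int.cast_commute a ω
  let f : Polynomial ℤ →+* R := Polynomial.eval₂RingHom' (Int.castRingHom R) ω hc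
  have hfX : f Polynomial.X = ω := Polynomial.eval₂_X _ _
  have := congrArg f (qPhi_identity (Polynomial.X : Polynomial ℤ) n k hk)
  rwa [map_mul, map_mul, qPhi_map, qPhi_map, qPhi_map, qBinom_map, hfX] at this

end Phi

section Main

variable {R : Type*} [Ring R] {ω x y : R}

lemma x_mul_pow_y (hy : ω * y = y * ω) (hxy : x * y = ω * (y * x)) :
    ∀ k, x * y ^ k = ω ^ k * (y ^ k * x)
  | 0 => by simp
  | k + 1 => by
    have hωy : Commute ω y := hy
    calc x * y ^ (k+1) = (x * y) * y ^ k := by rw [pow_succ', ← mul_assoc]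
      _ = ω * (y * (x * y ^ k)) := by rw [hxy, mul_assoc, mul_assoc]
      _ = ω * (y * (ω ^ k * (y ^ k * x))) := by rw [x_mul_pow_y hy hxy k]
      _ = ω * (ω ^ k * (y * (y ^ k * x))) := by
          rw [← mul_assoc y (ω ^ k), ← (hωy.pow_left k).eq, mul_assoc]
      _ = ω ^ (k+1) * (y ^ (k+1) * x) := by
          rw [pow_succ' ω, pow_succ' y, mul_assoc ω (ω ^ k), mul_assoc y (y ^ k)]

lemma term_x (hy : ω * y = y * ω) (hxy : x * y = ω * (y * x)) (c : R)
    (hc : Commute x c) (hcω : Commute c ω) (k m : ℕ) :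
    x * (c * (y ^ k * x ^ m)) = ω ^ k * (c * (y ^ k * x ^ (m+1))) := by
  rw [← mul_assoc x c, hc.eq, mul_assoc c x, ← mul_assoc x (y ^ k),
    x_mul_pow_y hy hxy k, mul_assoc (ω ^ k), mul_assoc (y ^ k), ← pow_succ',
    ← mul_assoc c, (hcω.pow_right k).eq, mul_assoc]

lemma term_y (c : R) (hc : Commute y c) (k m : ℕ) :
    y * (c * (y ^ k * x ^ m)) = c * (y ^ (k+1) * x ^ m) := by
  rw [← mul_assoc y c, hc.eq, mul_assoc c y, ← mul_assoc y (y ^ k), ← pow_succ']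

lemma expand_pow (hx : ω * x = x * ω) (hy : ω * y = y * ω) (hxy : x * y = ω * (y * x)) :
    ∀ q, (x + y) ^ q = ∑ k ∈ Finset.range (q + 1), qBinom ω q k * y ^ k * x ^ (q - k)
  | 0 => by simp
  | q + 1 => by
    have hωx : Commute ω x := hx
    have hωy : Commute ω y := hy
    have hωB : ∀ n k, Commute ω (qBinom ω n k) := fun n k => (Commute.refl ω).qBinom n k
    have hxB : ∀ n k, Commute x (qBinom ω n k) := fun n k => hωx.symm.qBinom n k
    have hyB : ∀ n k, Commute y (qBinom ω n k) := fun n k => hωy.symm.qBinom n k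
    have IH := expand_pow hx hy hxy q
    -- normalize the IH sum terms to right-assoc form
    have IH' : (x + y) ^ q = ∑ k ∈ Finset.range (q + 1), qBinom ω q k * (y ^ k * x ^ (q - k)) := by
      rw [IH]; exact Finset.sum_congr rfl fun k _ => (mul_assoc _ _ _)
    set T1 := ∑ k ∈ Finset.range (q + 1), qBinom ω q k * (y ^ (k+1) * x ^ (q - k)) with hT1
    set T2 := ∑ k ∈ Finset.range (q + 1),
        ω ^ (k+1) * (qBinom ω q (k+1) * (y ^ (k+1) * x ^ (q - k))) with hT2
    have hB : x * ((x + y) ^ q) = T2 + x ^ (q+1) := by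
      rw [IH', Finset.mul_sum]
      have e : ∀ k ∈ Finset.range (q + 1),
          x * (qBinom ω q k * (y ^ k * x ^ (q - k)))
            = ω ^ k * (qBinom ω q k * (y ^ k * x ^ ((q - k) + 1))) :=
        fun k _ => term_x hy hxy _ (hxB q k) (hωB q k).symm k (q - k)
      rw [Finset.sum_congr rfl e, Finset.sum_range_succ']
      have e0 : ω ^ 0 * (qBinom ω q 0 * (y ^ 0 * x ^ ((q - 0) + 1))) = x ^ (q + 1) := by
        simp
      rw [e0]
      congr 1
      rw [hT2, Finset.sum_range_succ, qBinom_eq_zero ω q (q+1) (by omega)]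
      simp only [zero_mul, mul_zero, add_zero]
      refine Finset.sum_congr rfl fun k hk => ?_
      have : q - (k + 1) + 1 = q - k := by
        simp only [Finset.mem_range] at hk; omega
      rw [this]
    have hC : y * ((x + y) ^ q) = T1 := by
      rw [IH', Finset.mul_sum]
      exact Finset.sum_congr rfl fun k _ => term_y _ (hyB q k) k (q - k)
    have hA : ∑ k ∈ Finset.range (q + 1 + 1), qBinom ω (q+1) k * y ^ k * x ^ (q + 1 - k)
        = T1 + T2 + x ^ (q+1) := by
      rw [Finset.sum_range_succ']
      simp only [Nat.succ_sub_succ, qBinom_succ_succ, qBinom_zero, pow_zero, one_mul,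
        mul_one, Nat.sub_zero, add_mul, Finset.sum_add_distrib, mul_assoc]
      rw [hT1, hT2]
    rw [pow_succ' (x + y) q, add_mul, hB, hC, hA]
    abel

end Main


theorem potter_schuetzenberger {R : Type*} [Ring R] (ω x y : R)
    (hx : ω * x = x * ω) (hy : ω * y = y * ω) (hxy : x * y = ω * (y * x)) (q : ℕ) :
    (x + y) ^ q = ∑ k ∈ Finset.range (q + 1), qBinom ω q k * y ^ k * x ^ (q - k) ∧
    ∀ k ≤ q, qPhi ω k * qPhi ω (q - k) * qBinom ω q k = qPhi ω q :=
  ⟨expand_pow hx hy hxy q, fun k hk => qPhi_identity' ω q k hk⟩
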